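/- For a polynomial p(z) = Σ_k c_k z^k ∈ ℂ[z] and A = [[a, b], [c, d]] ∈ ℂ^{2×2}, the induced action p_⋄(A) := Σ_k c_k A^{⋄k} equals [[p(a), b p'(a)], [c p'(a), d p'(a) + b c p''(a)]]. -/

import Mathlib

noncomputable def conv {M N : ℕ} (A B : Matrix (Fin M) (Fin N) ℂ) : Matrix (Fin M) (Fin N) ℂ :=
  fun i j => ∑ l ∈ Finset.Iic i, ∑ k ∈ Finset.Iic j, A l k * B (i - l) (j - k)

noncomputable def convId {M N : ℕ} : Matrix (Fin M) (Fin N) ℂ :=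
  fun i j => if i.1 = 0 ∧ j.1 = 0 then 1 else 0

noncomputable def convPow {M N : ℕ} (A : Matrix (Fin M) (Fin N) ℂ) : ℕ → Matrix (Fin M) (Fin N) ℂ
  | 0 => convId
  | k+1 => conv (convPow A k) A

noncomputable def convPoly {M N : ℕ} (p : Polynomial ℂ) (A : Matrix (Fin M) (Fin N) ℂ) :
    Matrix (Fin M) (Fin N) ℂ :=
  ∑ k ∈ p.support, p.coeff k • convPow A k

lemma conv_eq (A B : Matrix (Fin 2) (Fin 2) ℂ) :
    conv A B = !![A 0 0 * B 0 0, A 0 0 * B 0 1 + A 0 1 * B 0 0;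
                  A 0 0 * B 1 0 + A 1 0 * B 0 0,
                  A 0 0 * B 1 1 + A 0 1 * B 1 0 + A 1 0 * B 0 1 + A 1 1 * B 0 0] := by
  have h0 : Finset.Iic (0 : Fin 2) = {0} := by decide
  have h1 : Finset.Iic (1 : Fin 2) = {0, 1} := by decide
  ext i j
  fin_cases i <;> fin_cases j <;> simp [conv, h0, h1] <;> ring

lemma convPow_eq (a b c d : ℂ) (n : ℕ) :
    convPow !![a, b; c, d] n =
      !![a ^ n, n * b * a ^ (n - 1);
         n * c * a ^ (n - 1), n * d * a ^ (n - 1) + n * (n - 1) * b * c * a ^ (n - 2)] := by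
  induction n with
  | zero =>
    ext i j
    fin_cases i <;> fin_cases j <;> simp [convPow, convId]
  | succ n ih =>
    rw [convPow, ih, conv_eq]
    rcases n with _ | _ | n
    · norm_num
    · norm_num; ring_nf; simp
    · have e1 : n + 2 + 1 - 1 = n + 2 := rfl
      have e2 : n + 2 - 1 = n + 1 := rfl
      have e3 : n + 2 + 1 - 2 = n + 1 := rfl
      have e4 : n + 2 - 2 = n := rfl
      simp only [e1, e2, e3, e4]
      ext i j
      fin_cases i <;> fin_cases j <;> simp <;> ring_nf

lemma convPoly_eq_sum (p : Polynomial ℂ) (A : Matrix (Fin 2) (Fin 2) ℂ) :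
    convPoly p A = p.sum fun k c => c • convPow A k := rfl

theorem convPoly_two_by_two (p : Polynomial ℂ) (a b c d : ℂ) :
    convPoly p !![a, b; c, d] =
      !![p.eval a, b * p.derivative.eval a;
         c * p.derivative.eval a,
         d * p.derivative.eval a + b * c * (p.derivative.derivative.eval a)] := by
  induction p using Polynomial.induction_on' with
  | add p q hp hq =>
    rw [convPoly_eq_sum, Polynomial.sum_add_index, ← convPoly_eq_sum, ← convPoly_eq_sum,
      hp, hq]
    · ext i j
      fin_cases i <;> fin_cases j <;> simp <;> ring
    · intro _; simp
    · intro _ _ _; rw [add_smul]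
  | monomial n t =>
    rw [convPoly_eq_sum, Polynomial.sum_monomial_index, convPow_eq]
    · simp only [Polynomial.derivative_monomial, Polynomial.eval_monomial]
      rcases n with _ | _ | n
      · ext i j
        fin_cases i <;> fin_cases j <;> simp [convId]
      · norm_num
        exact ⟨mul_comm _ _, mul_comm _ _, mul_comm _ _⟩
      · have e2 : n + 2 - 1 = n + 1 := rfl
        have e4 : n + 2 - 2 = n := rfl
        have e5 : n + 1 - 1 = n := rfl
        simp only [e2, e4, e5]
        ext i j
        fin_cases i <;> fin_cases j <;> simp <;> push_cast <;> ring
    · simp
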